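/- Let X = S² × S¹ with the involution ρ((a,b,c),u) = ((a,b,c), ū), let f : X → X be f((a,b,c),u) = ((−a,−b,−c),u), and let A = {(a,b,0) ∈ S²} × {i,−i}. There is no continuous map F : X × [0,1] → X such that F(ρ(x),t) = ρ(F(x,t)) for all x ∈ X and t ∈ [0,1]; for each t ∈ [0,1] the map F(·,t) is fiber-preserving over the projection π₁ : X → S² (i.e. π₁(F((v,u),t)) = π₁(F((v,u'),t)) for all v ∈ S², u,u' ∈ S¹); F(x,0) = f(x) for all x ∈ X; and {x ∈ X : F(x,1) = x} = A. That is, A cannot be realized as the fixed point set of any map ℤ₂-fiberwise-homotopic to f. -/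

import Mathlib

/-- The unit 2-sphere in `ℝ³`. -/
def Sph2 : Set (ℝ × ℝ × ℝ) := {v | v.1 ^ 2 + v.2.1 ^ 2 + v.2.2 ^ 2 = 1}

/-- The antipodal map `v ↦ -v` on the 2-sphere. -/
def antipS2 (v : Sph2) : Sph2 :=
  ⟨(-(v : ℝ × ℝ × ℝ).1, -(v : ℝ × ℝ × ℝ).2.1, -(v : ℝ × ℝ × ℝ).2.2), by
    have h := v.2
    simp only [Sph2, Set.mem_setOf_eq] at h ⊢
    nlinarith [h]⟩

/-- The unit circle in `ℂ`. -/
def SphC : Set ℂ := {z | ‖z‖ = 1}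

/-- Complex conjugation on the unit circle. -/
def conjC (u : SphC) : SphC :=
  ⟨(starRingEnd ℂ) (u : ℂ), by
    have h := u.2
    simp only [SphC, Set.mem_setOf_eq] at h ⊢
    simpa using h⟩

/-- The total space `X = S² × S¹`. -/
def XS2S1 : Type := Sph2 × SphC

noncomputable instance : TopologicalSpace XS2S1 := by unfold XS2S1; infer_instance

/-- The involution `ρ((a,b,c),u) = ((a,b,c), ū)` on `X = S² × S¹`. -/
def rhoX (x : XS2S1) : XS2S1 := (x.1, conjC x.2)

/-- The map `f((a,b,c),u) = ((-a,-b,-c),u)` on `X = S² × S¹`. -/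
def fX (x : XS2S1) : XS2S1 := (antipS2 x.1, x.2)

/-- The subset `A = {(a,b,0) ∈ S²} × {i,-i}` of `X = S² × S¹`. -/
def AX : Set XS2S1 :=
  {x | (x.1 : ℝ × ℝ × ℝ).2.2 = 0 ∧ ((x.2 : ℂ) = Complex.I ∨ (x.2 : ℂ) = -Complex.I)}

/-- The set `A = {(a,b,0)} × {i,-i}` cannot be realized as the fixed point set of any
map `ℤ₂`-fiberwise-homotopic to `f((a,b,c),u) = ((-a,-b,-c),u)`, where fibers are those
of the projection `π₁ : S² × S¹ → S²`. -/
theorem no_equivariant_fiberwise_homotopy_realizing_A :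
    ¬ ∃ F : XS2S1 × unitInterval → XS2S1,
        Continuous F ∧
        (∀ (x : XS2S1) (t : unitInterval), F (rhoX x, t) = rhoX (F (x, t))) ∧
        (∀ (t : unitInterval) (v : Sph2) (u u' : SphC),
          (F ((v, u), t)).1 = (F ((v, u'), t)).1) ∧
        (∀ x : XS2S1, F (x, 0) = fX x) ∧
        {x : XS2S1 | F (x, 1) = x} = AX := by
  rintro ⟨F, hF, hEq, hFib, h0, h1⟩
  -- distinguished points
  have hvmem : ((1 : ℝ), (0 : ℝ), (0 : ℝ)) ∈ Sph2 := by norm_num [Sph2]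
  set v : Sph2 := ⟨(1, 0, 0), hvmem⟩ with hv
  have honemem : (1 : ℂ) ∈ SphC := by norm_num [SphC]
  set uone : SphC := ⟨1, honemem⟩ with huone
  have himem : Complex.I ∈ SphC := by simp [SphC]
  set ui : SphC := ⟨Complex.I, himem⟩ with hui
  -- ρ fixes (v, 1)
  have hrho : rhoX (v, uone) = (v, uone) := by
    simp only [rhoX]
    refine Prod.ext rfl ?_
    apply Subtype.ext
    simp [conjC, huone]
  -- the second coordinate of F((v,1),t) is real
  have hreal : ∀ t : unitInterval, ((F ((v, uone), t)).2 : ℂ).im = 0 := by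
    intro t
    have h := hEq (v, uone) t
    rw [hrho] at h
    have h2 : ((F ((v, uone), t)).2 : ℂ) = ((rhoX (F ((v, uone), t))).2 : ℂ) := by
      rw [← h]
    have h3 : ((F ((v, uone), t)).2 : ℂ).im
        = -((F ((v, uone), t)).2 : ℂ).im := by
      conv_lhs => rw [h2]
      simp [rhoX, conjC]
    linarith
  have hnorm : ∀ t : unitInterval, ‖((F ((v, uone), t)).2 : ℂ)‖ = 1 := by
    intro t
    exact (F ((v, uone), t)).2.2
  have hsq : ∀ t : unitInterval, ((F ((v, uone), t)).2 : ℂ).re ^ 2 = 1 := by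
    intro t
    have hn := hnorm t
    have him := hreal t
    have habs : ‖((F ((v, uone), t)).2 : ℂ)‖ = 1 := by
      simpa using hn
    have h2 : ‖((F ((v, uone), t)).2 : ℂ)‖ ^ 2 = 1 := by
      rw [habs]; norm_num
    rw [Complex.sq_norm, Complex.normSq_apply, him] at h2
    nlinarith [h2]
  -- r : I → ℝ, the real part of the second coordinate along the fiber over v at 1
  set r : unitInterval → ℝ := fun t => ((F ((v, uone), t)).2 : ℂ).re with hr
  have hrc : Continuous r := by
    apply Complex.continuous_re.comp
    apply continuous_subtype_val.comp
    have hc : Continuous (fun t : unitInterval => F ((v, uone), t)) :=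
      hF.comp (Continuous.prodMk_right ((v, uone) : XS2S1))
    exact (continuous_snd.comp hc)
  have hr0 : r 0 = 1 := by
    have := h0 ((v, uone) : XS2S1)
    simp only [hr]
    rw [this]
    simp [fX, huone]
  have hr1 : r 1 = 1 := by
    have h2 := hsq 1
    have : r 1 = 1 ∨ r 1 = -1 := by
      rcases mul_self_eq_one_iff.mp (by nlinarith [h2] : r 1 * r 1 = 1) with h | h
      · exact Or.inl h
      · exact Or.inr h
    rcases this with h | h
    · exact h
    · exfalso
      have hmem : (0 : ℝ) ∈ Set.Icc (r 1) (r 0) := by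
        rw [h, hr0]; norm_num
      have := intermediate_value_univ (1 : unitInterval) 0 hrc hmem
      obtain ⟨t, ht⟩ := this
      have := hsq t
      rw [show ((F ((v, uone), t)).2 : ℂ).re = r t from rfl, ht] at this
      norm_num at this
  -- (v, i) ∈ A so it is fixed at time 1
  have hAi : ((v, ui) : XS2S1) ∈ AX := by
    constructor
    · simp [hv]
    · left; simp [hui]
  have hfixi : F ((v, ui), 1) = ((v, ui) : XS2S1) := by
    have : ((v, ui) : XS2S1) ∈ {x : XS2S1 | F (x, 1) = x} := by rw [h1]; exact hAi
    exact this
  -- so F((v,1),1) = (v,1)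
  have hfst : (F ((v, uone), 1)).1 = v := by
    rw [hFib 1 v uone ui, hfixi]
  have hsnd : (F ((v, uone), 1)).2 = uone := by
    apply Subtype.ext
    apply Complex.ext
    · exact hr1
    · rw [hreal 1]; simp [huone]
  have hfix1 : F ((v, uone), 1) = ((v, uone) : XS2S1) := Prod.ext hfst hsnd
  -- but (v,1) ∉ A : contradiction
  have : ((v, uone) : XS2S1) ∈ AX := by rw [← h1]; exact hfix1
  rcases this.2 with h | h
  · rw [huone] at h
    simp only at h
    have := congrArg Complex.im h
    simp at this
  · rw [huone] at h
    simp only at h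
    have := congrArg Complex.im h
    simp at this
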